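/- Let X be a real inner product space, x, y ∈ X and 0 < m < M. If ⟨M•y − x, x − m•y⟩ ≥ 0, then ‖x‖·‖y‖ ≤ (1/2)·((M + m)/√(M·m))·⟨x,y⟩. -/
import Mathlib


open scoped RealInnerProductSpace

theorem reverse_cbs_real_mult {X : Type*} [NormedAddCommGroup X]
    [InnerProductSpace ℝ X] (x y : X) (m M : ℝ) (hm : 0 < m) (hmM : m < M)
    (h : 0 ≤ ⟪M • y - x, x - m • y⟫) :
    ‖x‖ * ‖y‖ ≤ (1 / 2) * ((M + m) / Real.sqrt (M * m)) * ⟪x, y⟫ := by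
  have hMm : 0 < M * m := mul_pos (hm.trans hmM) hm
  set s := Real.sqrt (M * m) with hs_def
  have hs : 0 < s := Real.sqrt_pos.mpr hMm
  have hs2 : s ^ 2 = M * m := Real.sq_sqrt hMm.le
  have hexp : ⟪M • y - x, x - m • y⟫ =
      (M + m) * ⟪x, y⟫ - ‖x‖ ^ 2 - M * m * ‖y‖ ^ 2 := by
    simp only [inner_sub_left, inner_sub_right, real_inner_smul_left,
      real_inner_smul_right, real_inner_self_eq_norm_sq]
    rw [real_inner_comm y x]
    ring
  have h1 : ‖x‖ ^ 2 + M * m * ‖y‖ ^ 2 ≤ (M + m) * ⟪x, y⟫ := by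
    rw [hexp] at h; linarith
  have h2 : 2 * s * (‖x‖ * ‖y‖) ≤ ‖x‖ ^ 2 + M * m * ‖y‖ ^ 2 := by
    nlinarith [sq_nonneg (‖x‖ - s * ‖y‖)]
  have h3 : ‖x‖ * ‖y‖ ≤ ((M + m) * ⟪x, y⟫) / (2 * s) := by
    rw [le_div_iff₀ (by positivity)]
    nlinarith
  calc ‖x‖ * ‖y‖ ≤ ((M + m) * ⟪x, y⟫) / (2 * s) := h3
    _ = (1 / 2) * ((M + m) / s) * ⟪x, y⟫ := by field_simp
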